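/- Let n = ∑_{i=1}^{r} s_{n_i} M_{n_i}, where n_1 > n_2 > … > n_r ≥ 0 are the positions of the nonzero digits of n and 1 ≤ s_{n_i} ≤ m_{n_i} − 1 for 1 ≤ i ≤ r, and set n^{(k)} = n − ∑_{i=1}^{k} s_{n_i} M_{n_i} for 0 < k ≤ r. Then n·K_n = ∑_{k=1}^{r} ( ∏_{j=1}^{k−1} r_{n_j}^{s_{n_j}} ) · s_{n_k} M_{n_k} K_{s_{n_k} M_{n_k}} + ∑_{k=1}^{r−1} ( ∏_{j=1}^{k−1} r_{n_j}^{s_{n_j}} ) · n^{(k)} · D_{s_{n_k} M_{n_k}} (as functions on G_m, with the empty product equal to 1). -/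
import Mathlib


open Finset
open scoped ENNReal NNReal

noncomputable section

namespace Vilenkin

/-- The generalized powers `M_0 = 1`, `M_{k+1} = m_k M_k`. -/
def M (m : ℕ → ℕ) : ℕ → ℕ
  | 0 => 1
  | k + 1 => m k * M m k

/-- The `j`-th digit of `n` in the mixed-radix system determined by `m`. -/
def digit (m : ℕ → ℕ) (n j : ℕ) : ℕ := (n / M m j) % m j

/-- The Vilenkin group `G_m`, the complete direct product of the cyclic groups `Z_{m_k}`. -/
abbrev G (m : ℕ → ℕ) : Type := ∀ k : ℕ, ZMod (m k)

instance (n : ℕ) : MeasurableSpace (ZMod n) := ⊤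

/-- The generalized Rademacher functions `r_k(x) = exp(2 π i x_k / m_k)`. -/
def rad (m : ℕ → ℕ) (k : ℕ) (x : G m) : ℂ :=
  Complex.exp (2 * Real.pi * Complex.I * ((x k).val : ℂ) / (m k : ℂ))

/-- The Vilenkin system `ψ_n = ∏_k r_k^{n_k}` (the product is finite). -/
def psi (m : ℕ → ℕ) (n : ℕ) (x : G m) : ℂ :=
  ∏ j ∈ Finset.range (n + 1), rad m j x ^ digit m n j

/-- The Dirichlet kernels `D_n = ∑_{k=0}^{n-1} ψ_k`. -/
def D (m : ℕ → ℕ) (n : ℕ) (x : G m) : ℂ :=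
  ∑ k ∈ Finset.range n, psi m k x

/-- The Fejér kernels `K_n = (1/n) ∑_{k=0}^{n-1} D_k`. -/
def K (m : ℕ → ℕ) (n : ℕ) (x : G m) : ℂ :=
  (n : ℂ)⁻¹ * ∑ k ∈ Finset.range n, D m k x

/-- The cylinder `I_n(x) = {y : y_j = x_j for j < n}`. -/
def cyl (m : ℕ → ℕ) (n : ℕ) (x : G m) : Set (G m) := {y | ∀ j < n, y j = x j}

/-- The element `e_n` with `n`-th coordinate `1` and all other coordinates `0`. -/
def e (m : ℕ → ℕ) (n : ℕ) : G m := fun k => if k = n then 1 else 0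


section AuxLemmas

variable {m : ℕ → ℕ}

lemma M_succ (k : ℕ) : M m (k + 1) = m k * M m k := rfl

lemma M_pos (hm : ∀ k, 2 ≤ m k) (k : ℕ) : 0 < M m k := by
  induction k with
  | zero => exact Nat.one_pos
  | succ k ih => exact Nat.mul_pos (by have := hm k; omega) ih

lemma M_mono (hm : ∀ k, 2 ≤ m k) : Monotone (M m) :=
  monotone_nat_of_le_succ fun k => by
    have h1 := M_pos hm k
    have h2 := hm k
    rw [M_succ]
    nlinarith

lemma succ_le_M (hm : ∀ k, 2 ≤ m k) (k : ℕ) : k + 1 ≤ M m k := by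
  induction k with
  | zero => simp [M]
  | succ k ih =>
    have h2 := hm k
    rw [M_succ]
    nlinarith

lemma M_dvd (i j : ℕ) (h : i ≤ j) : M m i ∣ M m j := by
  induction j with
  | zero => rw [Nat.le_zero.mp h]
  | succ j ih =>
    rcases Nat.lt_or_ge i (j + 1) with h' | h'
    · exact (ih (by omega)).trans ⟨m j, by rw [M_succ]; ring⟩
    · rw [show i = j + 1 by omega]

lemma digit_eq_zero_of_lt {n j : ℕ} (h : n < M m j) : digit m n j = 0 := by
  unfold digit
  rw [Nat.div_eq_of_lt h, Nat.zero_mod]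

lemma digit_add (hm : ∀ k, 2 ≤ m k) {N q t : ℕ} (ht : t < M m N) (hq : q < m N) (j : ℕ) :
    digit m (q * M m N + t) j = digit m t j + (if j = N then q else 0) := by
  rcases lt_trichotomy j N with hj | hj | hj
  · rw [if_neg (by omega), Nat.add_zero]
    obtain ⟨c, hc⟩ := M_dvd (j + 1) N (by omega)
    have hMj : 0 < M m j := M_pos hm j
    unfold digit
    rw [hc, M_succ, show q * (m j * M m j * c) + t = t + q * c * m j * M m j by ring,
      Nat.add_mul_div_right _ _ hMj, Nat.add_mul_mod_self_right]
  · rw [hj, if_pos rfl, digit_eq_zero_of_lt ht, Nat.zero_add]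
    unfold digit
    rw [show q * M m N + t = t + q * M m N by ring,
      Nat.add_mul_div_right _ _ (M_pos hm N), Nat.div_eq_of_lt ht, Nat.zero_add,
      Nat.mod_eq_of_lt hq]
  · have h1 : q * M m N + t < M m (N + 1) := by
      rw [M_succ]
      have : (q + 1) * M m N ≤ m N * M m N := Nat.mul_le_mul_right _ (by omega)
      nlinarith
    have h2 : M m (N + 1) ≤ M m j := M_mono hm (by omega)
    rw [if_neg (by omega), digit_eq_zero_of_lt (lt_of_lt_of_le h1 h2),
      digit_eq_zero_of_lt (lt_of_lt_of_le (ht.trans_le (M_mono hm (by omega))) le_rfl)]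

lemma psi_eq_prod (hm : ∀ k, 2 ≤ m k) {n L : ℕ} (h : n + 1 ≤ L) (x : G m) :
    psi m n x = ∏ j ∈ Finset.range L, rad m j x ^ digit m n j := by
  unfold psi
  apply Finset.prod_subset (Finset.range_subset_range.mpr h)
  intro j hj hj'
  simp only [Finset.mem_range, not_lt] at hj'
  have hnj : n < M m j := lt_of_lt_of_le (by omega) (succ_le_M hm j)
  rw [digit_eq_zero_of_lt hnj, pow_zero]

lemma psi_split (hm : ∀ k, 2 ≤ m k) {N q t : ℕ} (ht : t < M m N) (hq : q < m N) (x : G m) :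
    psi m (q * M m N + t) x = rad m N x ^ q * psi m t x := by
  set L := q * M m N + t + 1 + (t + 1) + (N + 1) with hL
  rw [psi_eq_prod hm (show q * M m N + t + 1 ≤ L by omega) x,
    psi_eq_prod hm (show t + 1 ≤ L by omega) x]
  have : ∀ j ∈ Finset.range L, rad m j x ^ digit m (q * M m N + t) j =
      rad m j x ^ digit m t j * (if j = N then rad m N x ^ q else 1) := by
    intro j _
    rw [digit_add hm ht hq j, pow_add]
    congr 1
    split_ifs with h
    · rw [h]
    · rw [pow_zero]
  rw [Finset.prod_congr rfl this, Finset.prod_mul_distrib, Finset.prod_ite_eq',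
    if_pos (Finset.mem_range.mpr (by omega)), mul_comm]

lemma D_split (hm : ∀ k, 2 ≤ m k) {N q t : ℕ} (ht : t ≤ M m N) (hq : q < m N) (x : G m) :
    D m (q * M m N + t) x = D m (q * M m N) x + rad m N x ^ q * D m t x := by
  unfold D
  rw [Finset.sum_range_add, Finset.mul_sum]
  congr 1
  exact Finset.sum_congr rfl fun t' ht' =>
    psi_split hm (lt_of_lt_of_le (Finset.mem_range.mp ht') ht) hq x

lemma mul_K (n : ℕ) (x : G m) : (n : ℂ) * K m n x = ∑ l ∈ Finset.range n, D m l x := by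
  rcases Nat.eq_zero_or_pos n with rfl | hn
  · simp [K]
  · unfold K
    rw [← mul_assoc, mul_inv_cancel₀ (by exact_mod_cast hn.ne'), one_mul]


lemma sum_lt_M (hm : ∀ k, 2 ≤ m k) :
    ∀ (r : ℕ) (nk s : ℕ → ℕ) (N : ℕ),
      (∀ i j, i < j → j < r → nk j < nk i) →
      (∀ i, i < r → s i ≤ m (nk i) - 1) →
      (∀ i, i < r → nk i < N) →
      ∑ i ∈ Finset.range r, s i * M m (nk i) < M m N := by
  intro r
  induction r with
  | zero => intro nk s N _ _ _; simpa using M_pos hm N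
  | succ r ih =>
    intro nk s N hdec hs hN
    rw [Finset.sum_range_succ']
    have h1 : ∑ i ∈ Finset.range r, s (i + 1) * M m (nk (i + 1)) < M m (nk 0) :=
      ih (fun i => nk (i + 1)) (fun i => s (i + 1)) (nk 0)
        (fun i j hij hj => hdec (i + 1) (j + 1) (by omega) (by omega))
        (fun i hi => hs (i + 1) (by omega))
        (fun i hi => hdec 0 (i + 1) (by omega) (by omega))
    have hs0 := hs 0 (by omega)
    have hm0 := hm (nk 0)
    have h2 : (s 0 + 1) * M m (nk 0) ≤ M m (nk 0 + 1) := by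
      rw [M_succ]
      exact Nat.mul_le_mul_right _ (by omega)
    have h3 : M m (nk 0 + 1) ≤ M m N := M_mono hm (hN 0 (by omega))
    nlinarith [M_pos hm (nk 0)]

lemma aux (hm : ∀ k, 2 ≤ m k) :
    ∀ (r : ℕ) (nk s : ℕ → ℕ),
      (∀ i j, i < j → j < r → nk j < nk i) →
      (∀ i, i < r → 1 ≤ s i ∧ s i ≤ m (nk i) - 1) →
      ∀ x : G m,
      ∑ l ∈ Finset.range (∑ i ∈ Finset.range r, s i * M m (nk i)), D m l x =
        (∑ k ∈ Finset.range r,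
          (∏ j ∈ Finset.range k, rad m (nk j) x ^ s j) *
            ((s k * M m (nk k) : ℕ) : ℂ) * K m (s k * M m (nk k)) x)
        + ∑ k ∈ Finset.range (r - 1),
            (∏ j ∈ Finset.range k, rad m (nk j) x ^ s j) *
              ((∑ i ∈ Finset.Ico (k + 1) r, s i * M m (nk i) : ℕ) : ℂ) *
              D m (s k * M m (nk k)) x := by
  intro r
  induction r with
  | zero => simp
  | succ r ih =>
    intro nk s hdec hs x
    rcases Nat.eq_zero_or_pos r with rfl | hrpos
    · simp only [zero_add, Finset.sum_range_one, show (1:ℕ) - 1 = 0 from rfl, Finset.range_zero,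
        Finset.sum_empty, add_zero, Finset.prod_range_zero, Finset.prod_empty, one_mul]
      exact (mul_K _ x).symm
    -- general step
    set N := nk 0 with hN
    set q := s 0 with hq0
    set T := ∑ i ∈ Finset.range r, s (i + 1) * M m (nk (i + 1)) with hT
    have hqm : q < m N := by
      rw [hq0, hN]
      have h1 := hs 0 (by omega)
      have h2 := hm (nk 0)
      omega
    have hTlt : T < M m N :=
      sum_lt_M hm r (fun i => nk (i + 1)) (fun i => s (i + 1)) N
        (fun i j hij hj => hdec (i + 1) (j + 1) (by omega) (by omega))
        (fun i hi => (hs (i + 1) (by omega)).2)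
        (fun i hi => hdec 0 (i + 1) (by omega) (by omega))
    have hn : ∑ i ∈ Finset.range (r + 1), s i * M m (nk i) = q * M m N + T := by
      rw [Finset.sum_range_succ', Nat.add_comm]
    -- LHS computation
    have hLHS : ∑ l ∈ Finset.range (∑ i ∈ Finset.range (r + 1), s i * M m (nk i)), D m l x =
        (∑ l ∈ Finset.range (q * M m N), D m l x)
          + ((T : ℂ) * D m (q * M m N) x
            + rad m N x ^ q * ∑ t ∈ Finset.range T, D m t x) := by
      rw [hn, Finset.sum_range_add]
      congr 1
      have : ∀ t ∈ Finset.range T, D m (q * M m N + t) x =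
          D m (q * M m N) x + rad m N x ^ q * D m t x := fun t ht =>
        D_split hm (le_of_lt (lt_of_lt_of_le (Finset.mem_range.mp ht) hTlt.le)) hqm x
      rw [Finset.sum_congr rfl this, Finset.sum_add_distrib, Finset.sum_const,
        Finset.card_range, nsmul_eq_mul, ← Finset.mul_sum]
    rw [hLHS, ih (fun i => nk (i + 1)) (fun i => s (i + 1))
      (fun i j hij hj => hdec (i + 1) (j + 1) (by omega) (by omega))
      (fun i hi => hs (i + 1) (by omega)) x]
    -- RHS computation
    obtain ⟨r', rfl⟩ : ∃ r', r = r' + 1 := ⟨r - 1, by omega⟩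
    rw [show r' + 1 + 1 - 1 = r' + 1 by omega]
    rw [Finset.sum_range_succ' (fun k => (∏ j ∈ Finset.range k, rad m (nk j) x ^ s j) *
        ((s k * M m (nk k) : ℕ) : ℂ) * K m (s k * M m (nk k)) x) (r' + 1)]
    rw [Finset.sum_range_succ' (fun k => (∏ j ∈ Finset.range k, rad m (nk j) x ^ s j) *
        ((∑ i ∈ Finset.Ico (k + 1) (r' + 1 + 1), s i * M m (nk i) : ℕ) : ℂ) *
        D m (s k * M m (nk k)) x) r']
    simp only [Finset.prod_range_zero, one_mul]
    have e1 : ∀ k ∈ Finset.range (r' + 1),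
        (∏ j ∈ Finset.range (k + 1), rad m (nk j) x ^ s j) *
          ((s (k + 1) * M m (nk (k + 1)) : ℕ) : ℂ) * K m (s (k + 1) * M m (nk (k + 1))) x =
        rad m N x ^ q *
          ((∏ j ∈ Finset.range k, rad m (nk (j + 1)) x ^ s (j + 1)) *
            ((s (k + 1) * M m (nk (k + 1)) : ℕ) : ℂ) * K m (s (k + 1) * M m (nk (k + 1))) x) := by
      intro k _
      rw [Finset.prod_range_succ']
      ring
    have e2 : ∀ k ∈ Finset.range r',
        (∏ j ∈ Finset.range (k + 1), rad m (nk j) x ^ s j) *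
          ((∑ i ∈ Finset.Ico (k + 1 + 1) (r' + 1 + 1), s i * M m (nk i) : ℕ) : ℂ) *
          D m (s (k + 1) * M m (nk (k + 1))) x =
        rad m N x ^ q *
          ((∏ j ∈ Finset.range k, rad m (nk (j + 1)) x ^ s (j + 1)) *
            ((∑ i ∈ Finset.Ico (k + 1) (r' + 1), s (i + 1) * M m (nk (i + 1)) : ℕ) : ℂ) *
            D m (s (k + 1) * M m (nk (k + 1))) x) := by
      intro k _
      have hI : ∑ i ∈ Finset.Ico (k + 1 + 1) (r' + 1 + 1), s i * M m (nk i) =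
          ∑ i ∈ Finset.Ico (k + 1) (r' + 1), s (i + 1) * M m (nk (i + 1)) := by
        rw [Finset.sum_Ico_eq_sum_range, Finset.sum_Ico_eq_sum_range]
        rw [show r' + 1 + 1 - (k + 1 + 1) = r' + 1 - (k + 1) by omega]
        exact Finset.sum_congr rfl fun j _ => by rw [show k + 1 + 1 + j = k + 1 + j + 1 by omega]
      rw [Finset.prod_range_succ', hI]
      ring
    rw [Finset.sum_congr rfl e1, Finset.sum_congr rfl e2, ← Finset.mul_sum, ← Finset.mul_sum]
    have hIco0 : ∑ i ∈ Finset.Ico (0 + 1) (r' + 1 + 1), s i * M m (nk i) = T := by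
      rw [hT, Finset.sum_Ico_eq_sum_range]
      rw [show r' + 1 + 1 - (0 + 1) = r' + 1 by omega]
      exact Finset.sum_congr rfl fun j _ => by rw [show 0 + 1 + j = j + 1 by omega]
    rw [hIco0, mul_K]
    simp only [hN, hq0, hT, Nat.add_sub_cancel]
    ring


lemma Icc_one_sum {β : Type*} [AddCommMonoid β] (f : ℕ → β) (r : ℕ) :
    ∑ i ∈ Finset.Icc 1 r, f i = ∑ i ∈ Finset.range r, f (i + 1) := by
  rw [← Finset.Ico_add_one_right_eq_Icc, Finset.sum_Ico_eq_sum_range,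
    show r + 1 - 1 = r by omega]
  exact Finset.sum_congr rfl fun j _ => by rw [Nat.add_comm]

lemma Icc_one_prod {β : Type*} [CommMonoid β] (f : ℕ → β) (r : ℕ) :
    ∏ i ∈ Finset.Icc 1 r, f i = ∏ i ∈ Finset.range r, f (i + 1) := by
  rw [← Finset.Ico_add_one_right_eq_Icc, Finset.prod_Ico_eq_prod_range,
    show r + 1 - 1 = r by omega]
  exact Finset.prod_congr rfl fun j _ => by rw [Nat.add_comm]


end AuxLemmas

/-- decomposition of `n K_n` along the nonzero digits of `n`. -/
theorem statement7 (m : ℕ → ℕ) (hm : ∀ k, 2 ≤ m k) (r : ℕ) (hr : 1 ≤ r)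
    (nk : ℕ → ℕ) (hdec : ∀ i : ℕ, 1 ≤ i → i < r → nk (i + 1) < nk i)
    (s : ℕ → ℕ) (hs : ∀ i ∈ Finset.Icc 1 r, 1 ≤ s i ∧ s i ≤ m (nk i) - 1)
    (n : ℕ) (hn : n = ∑ i ∈ Finset.Icc 1 r, s i * M m (nk i)) (x : G m) :
    (n : ℂ) * K m n x =
      (∑ k ∈ Finset.Icc 1 r,
        (∏ j ∈ Finset.Icc 1 (k - 1), rad m (nk j) x ^ s j) *
          ((s k * M m (nk k) : ℕ) : ℂ) * K m (s k * M m (nk k)) x)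
      + ∑ k ∈ Finset.Icc 1 (r - 1),
          (∏ j ∈ Finset.Icc 1 (k - 1), rad m (nk j) x ^ s j) *
            ((n - ∑ i ∈ Finset.Icc 1 k, s i * M m (nk i) : ℕ) : ℂ) *
            D m (s k * M m (nk k)) x := by
  have chain : ∀ b a : ℕ, 1 ≤ a → a < b → b ≤ r → nk b < nk a := by
    intro b
    induction b with
    | zero => intro a _ h _; omega
    | succ b ihb =>
      intro a ha hab hbr
      rcases Nat.lt_or_ge a b with h | h
      · exact lt_trans (hdec b (by omega) (by omega)) (ihb a ha h (by omega))
      · have hab' : a = b := by omega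
        subst hab'
        exact hdec a ha (by omega)
  have hdec' : ∀ i j : ℕ, i < j → j < r → nk (j + 1) < nk (i + 1) :=
    fun i j hij hj => chain (j + 1) (i + 1) (by omega) (by omega) (by omega)
  have hs' : ∀ i, i < r → 1 ≤ s (i + 1) ∧ s (i + 1) ≤ m (nk (i + 1)) - 1 :=
    fun i hi => hs (i + 1) (Finset.mem_Icc.mpr ⟨by omega, by omega⟩)
  have key := aux hm r (fun i => nk (i + 1)) (fun i => s (i + 1)) hdec' hs' x
  have hnn : n = ∑ i ∈ Finset.range r, s (i + 1) * M m (nk (i + 1)) := by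
    rw [hn, Icc_one_sum]
  have hL : (n : ℂ) * K m n x =
      ∑ l ∈ Finset.range (∑ i ∈ Finset.range r, s (i + 1) * M m (nk (i + 1))), D m l x := by
    rw [mul_K, hnn]
  rw [hL, key]
  congr 1
  · rw [Icc_one_sum (fun k => (∏ j ∈ Finset.Icc 1 (k - 1), rad m (nk j) x ^ s j) *
      ((s k * M m (nk k) : ℕ) : ℂ) * K m (s k * M m (nk k)) x) r]
    refine Finset.sum_congr rfl fun i _ => ?_
    rw [show i + 1 - 1 = i by omega, Icc_one_prod]
  · rw [Icc_one_sum (fun k => (∏ j ∈ Finset.Icc 1 (k - 1), rad m (nk j) x ^ s j) *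
      ((n - ∑ i ∈ Finset.Icc 1 k, s i * M m (nk i) : ℕ) : ℂ) *
      D m (s k * M m (nk k)) x) (r - 1)]
    refine Finset.sum_congr rfl fun i hi => ?_
    have hi' : i < r - 1 := Finset.mem_range.mp hi
    have hsplit : (∑ t ∈ Finset.Icc 1 (i + 1), s t * M m (nk t))
        + ∑ t ∈ Finset.Icc (i + 2) r, s t * M m (nk t) = n := by
      rw [hn, ← Finset.Ico_add_one_right_eq_Icc, ← Finset.Ico_add_one_right_eq_Icc, ← Finset.Ico_add_one_right_eq_Icc,
        show i + 1 + 1 = i + 2 from rfl]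
      exact Finset.sum_Ico_consecutive _ (by omega) (by omega)
    have htail : ∑ t ∈ Finset.Icc (i + 2) r, s t * M m (nk t) =
        ∑ t ∈ Finset.Ico (i + 1) r, s (t + 1) * M m (nk (t + 1)) := by
      rw [← Finset.Ico_add_one_right_eq_Icc, Finset.sum_Ico_eq_sum_range, Finset.sum_Ico_eq_sum_range,
        show r + 1 - (i + 2) = r - (i + 1) by omega]
      refine Finset.sum_congr rfl fun j _ => ?_
      rw [show i + 1 + j + 1 = i + 2 + j by omega]
    have hco : n - ∑ t ∈ Finset.Icc 1 (i + 1), s t * M m (nk t) =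
        ∑ t ∈ Finset.Ico (i + 1) r, s (t + 1) * M m (nk (t + 1)) := by omega
    rw [show i + 1 - 1 = i by omega, Icc_one_prod, hco]

end Vilenkin

end
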